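/- Let G be a locally compact group with Haar measure ν, U a symmetric relatively compact open neighborhood of the identity, and B ⊆ G compact. Then there exist a regular compact set C' with U-connected interior and ν(∂C') = 0, and finitely many elements g₁,…,gₙ ∈ G, such that B ⊆ ⋃ᵢ gᵢC' and gᵢC'·U ∩ gⱼC'·U = ∅ whenever i ≠ j. -/

import Mathlib

open MeasureTheory Set Pointwise

private lemma aux_closure_subset_mul {G : Type*} [Group G] [TopologicalSpace G]
    [IsTopologicalGroup G] {U : Set G} (hUopen : IsOpen U) (hUone : (1:G) ∈ U)
    (hUsymm : U⁻¹ = U) (s : Set G) : closure s ⊆ s * U := by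
  intro y hy
  have ho : IsOpen (y • U) := hUopen.smul y
  have hmem : y ∈ y • U := ⟨1, hUone, mul_one y⟩
  obtain ⟨x, hx1, hx2⟩ := mem_closure_iff.1 hy _ ho hmem
  obtain ⟨u, hu, hxu⟩ := hx1
  refine ⟨x, hx2, u⁻¹, ?_, ?_⟩
  · rw [← hUsymm]; exact inv_mem_inv.2 hu
  · simp only [smul_eq_mul] at hxu; rw [← hxu]; group

theorem stmt_15 {G : Type*} [Group G] [TopologicalSpace G] [IsTopologicalGroup G]
    [LocallyCompactSpace G] [MeasurableSpace G] [BorelSpace G]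
    (ν : Measure G) [ν.IsHaarMeasure]
    (U : Set G) (hUopen : IsOpen U) (hUone : (1 : G) ∈ U) (hUsymm : U⁻¹ = U)
    (hUrc : IsCompact (closure U))
    (B : Set G) (hB : IsCompact B) :
    ∃ C' : Set G, IsCompact C' ∧ C' = closure (interior C') ∧
      (¬ ∃ A : Set G, A ≠ ∅ ∧ A ≠ interior C' ∧ A * U ∩ interior C' = A) ∧
      ν (frontier C') = 0 ∧
      ∃ (n : ℕ) (g : Fin n → G),
        B ⊆ ⋃ i, g i • C' ∧
        ∀ i j, i ≠ j → (g i • C') * U ∩ ((g j • C') * U) = ∅ := by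
  classical
  -- the open subgroup generated by U
  set H : Subgroup G := Subgroup.closure U with hHdef
  have hUH : U ⊆ (H : Set G) := Subgroup.subset_closure
  have hHopen : IsOpen (H : Set G) :=
    Subgroup.isOpen_of_mem_nhds H (Filter.mem_of_superset (hUopen.mem_nhds hUone) hUH)
  have hHclosed : IsClosed (H : Set G) := H.isClosed_of_isOpen hHopen
  have hpowH : ∀ n : ℕ, U ^ n ⊆ (H : Set G) := by
    intro n; induction n with
    | zero => simpa using one_mem H
    | succ n ih =>
      rw [pow_succ]
      rintro x ⟨a, ha, b, hb, rfl⟩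
      exact mul_mem (ih ha) (hUH hb)
  -- U^n is open for n ≥ 1
  have hUnopen : ∀ n : ℕ, IsOpen (U ^ (n+1)) := by
    intro n
    rw [pow_succ]
    exact hUopen.mul_left
  -- H is covered by the powers of U
  have hHpow : (H : Set G) ⊆ ⋃ n : ℕ, U ^ (n+1) := by
    have hKsub : H ≤ {
        carrier := ⋃ n : ℕ, U ^ (n+1)
        one_mem' := mem_iUnion.2 ⟨0, by simpa using hUone⟩
        mul_mem' := by
          rintro a b ha hb
          obtain ⟨m, hm⟩ := mem_iUnion.1 ha
          obtain ⟨k, hk⟩ := mem_iUnion.1 hb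
          exact mem_iUnion.2 ⟨m + k + 1, by
            have : U ^ (m+1) * U ^ (k+1) = U ^ (m+k+1+1) := by rw [← pow_add]; ring_nf
            rw [← this]; exact Set.mul_mem_mul hm hk⟩
        inv_mem' := by
          rintro a ha
          obtain ⟨m, hm⟩ := mem_iUnion.1 ha
          refine mem_iUnion.2 ⟨m, ?_⟩
          have : (U ^ (m+1))⁻¹ = U ^ (m+1) := by
            have h2 : (U ^ (m+1))⁻¹ = (U⁻¹) ^ (m+1) := (inv_pow U (m+1)).symm
            rw [h2, hUsymm]
          rw [← this]
          exact Set.inv_mem_inv.2 hm } := by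
      rw [hHdef]
      exact (Subgroup.closure_le _).2 (fun x hx => mem_iUnion.2 ⟨0, by simpa using hx⟩)
    exact hKsub
  -- cover B by finitely many cosets of H
  obtain ⟨s, hs⟩ := hB.elim_finite_subcover (fun b : G => b • (H : Set G))
    (fun b => hHopen.smul b)
    (fun b hb => mem_iUnion.2 ⟨b, ⟨1, one_mem H, mul_one b⟩⟩)
  set l : List (G ⧸ H) := (s.image (QuotientGroup.mk : G → G ⧸ H)).toList with hldef
  have hlnd : l.Nodup := Finset.nodup_toList _
  set n := l.length with hndef
  set g : Fin n → G := fun i => (l.get i).out with hgdef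
  have hgq : ∀ i, (QuotientGroup.mk (g i) : G ⧸ H) = l.get i := fun i => Quotient.out_eq _
  have hgne : ∀ i j : Fin n, i ≠ j →
      (QuotientGroup.mk (g i) : G ⧸ H) ≠ QuotientGroup.mk (g j) := by
    intro i j hij h
    rw [hgq i, hgq j] at h
    exact hij ((List.Nodup.get_inj_iff hlnd).1 h)
  have hcov : ∀ b ∈ B, ∃ i, (g i)⁻¹ * b ∈ (H : Set G) := by
    intro b hb
    obtain ⟨a, ha⟩ := mem_iUnion.1 (hs hb)
    simp only [mem_iUnion, exists_prop] at ha
    obtain ⟨has, hba⟩ := ha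
    have hmkab : (QuotientGroup.mk a : G ⧸ H) = QuotientGroup.mk b := by
      rw [QuotientGroup.eq]
      obtain ⟨h, hh, hbh⟩ := hba
      rw [← hbh]; simpa using hh
    have hmem : (QuotientGroup.mk b : G ⧸ H) ∈ l := by
      rw [hldef, Finset.mem_toList]
      exact Finset.mem_image.2 ⟨a, has, hmkab⟩
    obtain ⟨i, hi⟩ := List.mem_iff_get.1 hmem
    refine ⟨i, ?_⟩
    have : (QuotientGroup.mk (g i) : G ⧸ H) = QuotientGroup.mk b := by rw [hgq i, hi]
    exact QuotientGroup.eq.1 this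
  -- the compact piece of B seen from the chosen representatives
  set K : Set G := (⋃ i, (g i)⁻¹ • B) ∩ (H : Set G) with hKdef
  have hKc : IsCompact K :=
    ((isCompact_iUnion (fun i => hB.smul ((g i)⁻¹))).inter_right hHclosed)
  have hKcov : K ⊆ ⋃ m : ℕ, U ^ (m+1) := fun x hx => hHpow hx.2
  obtain ⟨F, hF⟩ := hKc.elim_finite_subcover (fun m => U ^ (m+1)) hUnopen hKcov
  set N : ℕ := F.sup id + 1 with hNdef
  have hKN : K ⊆ U ^ N := by
    intro x hx
    obtain ⟨m, hm⟩ := mem_iUnion.1 (hF hx)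
    simp only [mem_iUnion, exists_prop] at hm
    exact Set.pow_subset_pow_right hUone
      (Nat.succ_le_succ (Finset.le_sup (f := id) hm.1)) hm.2
  -- compactness facts about powers of U
  have hclpow : ∀ m : ℕ, IsCompact (closure (U ^ m)) := by
    intro m
    have h1 : IsCompact ((closure U) ^ m) := by
      induction m with
      | zero => rw [pow_zero]; exact Set.finite_one.isCompact
      | succ k ih => rw [pow_succ]; exact ih.mul hUrc
    exact h1.closure.of_isClosed_subset isClosed_closure
      (closure_mono (Set.pow_subset_pow_left subset_closure))
  have hclsub : closure (U ^ N) ⊆ U ^ (N + 1) := by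
    rw [pow_succ]
    exact aux_closure_subset_mul hUopen hUone hUsymm _
  -- Urysohn function
  obtain ⟨f, hf1, hf0, hfc, hf01⟩ := exists_continuous_one_zero_of_isCompact (hclpow N)
    (hUnopen N).isClosed_compl (Set.disjoint_left.2 fun x hx hxc => hxc (hclsub hx))
  -- pick a level of measure zero
  set μ : Measure G := ν.restrict (tsupport f) with hμdef
  haveI : IsFiniteMeasure μ :=
    ⟨by rw [hμdef, Measure.restrict_apply_univ]; exact hfc.measure_lt_top⟩
  have hcnt : Set.Countable {t : ℝ | 0 < μ {x | f x = t}} :=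
    Measure.countable_meas_level_set_pos f.continuous.measurable
  obtain ⟨t, htmem⟩ : (Ioo (0:ℝ) 1 \ {t : ℝ | 0 < μ {x | f x = t}}).Nonempty := by
    refine Set.diff_nonempty.2 fun hsub => ?_
    have h2 : (Ioo (0:ℝ) 1).Countable := hcnt.mono hsub
    rw [← Cardinal.le_aleph0_iff_set_countable, Cardinal.mk_Ioo_real one_pos] at h2
    exact h2.not_gt Cardinal.aleph0_lt_continuum
  obtain ⟨ht01, htns⟩ := htmem
  have htpos : (0:ℝ) < t := ht01.1
  have htlt1 : t < 1 := ht01.2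
  have hlev : ν {x | f x = t} = 0 := by
    have hsubT : {x | f x = t} ⊆ tsupport f := by
      intro x hx
      apply subset_tsupport
      simp only [Function.mem_support]
      intro h0
      rw [mem_setOf_eq, h0] at hx
      exact htpos.ne hx
    have hms : MeasurableSet {x | f x = t} :=
      measurableSet_eq_fun f.continuous.measurable measurable_const
    have : μ {x | f x = t} = ν {x | f x = t} := by
      rw [hμdef, Measure.restrict_apply hms, Set.inter_eq_left.2 hsubT]
    rw [← this]
    exact le_antisymm (not_lt.1 (by simpa using htns)) zero_le
  -- the set C'
  set C' : Set G := closure {x | t < f x} with hC'def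
  have hopenlt : IsOpen {x | t < f x} := isOpen_lt continuous_const f.continuous
  have hC'closed : IsClosed C' := isClosed_closure
  have hC'le : C' ⊆ {x | t ≤ f x} :=
    closure_minimal (fun x hx => le_of_lt (mem_setOf_eq ▸ hx)) (isClosed_le continuous_const f.continuous)
  have hC'sub : C' ⊆ U ^ (N+1) := by
    intro x hx
    by_contra hxn
    have h0 : f x = 0 := hf0 hxn
    have := hC'le hx
    rw [mem_setOf_eq, h0] at this
    exact absurd this (not_le.2 htpos)
  have hltint : {x | t < f x} ⊆ interior C' :=
    interior_maximal subset_closure hopenlt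
  have hNint : U ^ N ⊆ interior C' := by
    intro x hx
    apply hltint
    have : f x = 1 := hf1 (subset_closure hx)
    rw [mem_setOf_eq, this]
    exact htlt1
  have hC'compact : IsCompact C' := by
    refine IsCompact.of_isClosed_subset hfc isClosed_closure (closure_minimal ?_ (isClosed_tsupport f))
    intro x hx
    apply subset_tsupport
    simp only [Function.mem_support]
    intro h0
    rw [mem_setOf_eq, h0] at hx
    exact (htpos.trans hx).false
  have hreg : C' = closure (interior C') := by
    refine Subset.antisymm (closure_mono hltint) (closure_minimal interior_subset hC'closed)
  have hfront : ν (frontier C') = 0 := by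
    refine measure_mono_null ?_ hlev
    intro x hx
    have hx' : x ∈ closure C' \ interior C' := hx
    have h1 : t ≤ f x := hC'le (hC'closed.closure_subset hx'.1)
    have hx2 := hx'.2
    have h2 : ¬ t < f x := fun h => hx2 (hltint h)
    exact le_antisymm (not_lt.1 h2) h1
  -- U-connectedness of the interior
  have hconn : ¬ ∃ A : Set G, A ≠ ∅ ∧ A ≠ interior C' ∧ A * U ∩ interior C' = A := by
    rintro ⟨A, hAne, hAneq, hAeq⟩
    set S := interior C' with hSdef
    have hAS : A ⊆ S := by rw [← hAeq]; exact inter_subset_right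
    have hSsub : S ⊆ U ^ (N+1) := fun x hx => hC'sub (interior_subset hx)
    have hUNS : U ^ N ⊆ S := hNint
    have claim_down : ∀ m : ℕ, m ≤ N + 1 → ∀ x ∈ U ^ m, x ∈ A → (1:G) ∈ A := by
      intro m
      induction m with
      | zero =>
        intro _ x hx hxA
        rw [pow_zero] at hx
        rwa [← Set.mem_one.1 hx]
      | succ k ih =>
        intro hk x hx hxA
        rw [pow_succ] at hx
        obtain ⟨y, hy, u, hu, rfl⟩ := hx
        have hyS : y ∈ S := hUNS (Set.pow_subset_pow_right hUone (Nat.le_of_succ_le_succ hk) hy)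
        have hyAU : y ∈ A * U := by
          refine ⟨y * u, hxA, u⁻¹, ?_, by group⟩
          rw [← hUsymm]; exact Set.inv_mem_inv.2 hu
        have hyA : y ∈ A := by rw [← hAeq]; exact ⟨hyAU, hyS⟩
        exact ih (Nat.le_of_succ_le hk) y hy hyA
    have claim_up : (1:G) ∈ A → ∀ m : ℕ, m ≤ N + 1 → ∀ x ∈ U ^ m, x ∈ S → x ∈ A := by
      intro h1A m
      induction m with
      | zero =>
        intro _ x hx _
        rw [pow_zero] at hx
        rwa [Set.mem_one.1 hx]
      | succ k ih =>
        intro hk x hx hxS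
        rw [pow_succ] at hx
        obtain ⟨y, hy, u, hu, rfl⟩ := hx
        have hyS : y ∈ S := hUNS (Set.pow_subset_pow_right hUone (Nat.le_of_succ_le_succ hk) hy)
        have hyA : y ∈ A := ih (Nat.le_of_succ_le hk) y hy hyS
        have : y * u ∈ A * U := ⟨y, hyA, u, hu, rfl⟩
        rw [← hAeq]; exact ⟨this, hxS⟩
    obtain ⟨a, ha⟩ := Set.nonempty_iff_ne_empty.2 hAne
    have h1A : (1:G) ∈ A := claim_down (N+1) le_rfl a (hSsub (hAS ha)) ha
    exact hAneq (Subset.antisymm hAS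
      (fun x hx => claim_up h1A (N+1) le_rfl x (hSsub hx) hx))
  -- coverage
  have hC'H : C' ⊆ (H : Set G) := fun x hx => hpowH (N+1) (hC'sub hx)
  have hcoverage : B ⊆ ⋃ i, g i • C' := by
    intro b hb
    obtain ⟨i, hi⟩ := hcov b hb
    refine mem_iUnion.2 ⟨i, ?_⟩
    have hbK : (g i)⁻¹ * b ∈ K := by
      refine ⟨mem_iUnion.2 ⟨i, ⟨b, hb, rfl⟩⟩, hi⟩
    have : (g i)⁻¹ * b ∈ C' := interior_subset (hNint (hKN hbK))
    exact ⟨(g i)⁻¹ * b, this, by simp only [smul_eq_mul]; group⟩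
  -- disjointness
  have hdisj : ∀ i j : Fin n, i ≠ j → (g i • C') * U ∩ ((g j • C') * U) = ∅ := by
    intro i j hij
    rw [Set.eq_empty_iff_forall_notMem]
    rintro x ⟨hxi, hxj⟩
    have key : ∀ k : Fin n, x ∈ (g k • C') * U → (g k)⁻¹ * x ∈ (H : Set G) := by
      rintro k ⟨c, hc, u, hu, rfl⟩
      obtain ⟨a, haC, rfl⟩ := hc
      have h1 : a * u ∈ (H : Set G) := mul_mem (hC'H haC) (hUH hu)
      have h2 : (g k)⁻¹ * (g k • a * u) = a * u := by
        simp only [smul_eq_mul]; group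
      rwa [h2]
    have h1 := key i hxi
    have h2 := key j hxj
    have h3 : (g i)⁻¹ * g j ∈ (H : Set G) := by
      have heq : (g i)⁻¹ * g j = ((g i)⁻¹ * x) * ((g j)⁻¹ * x)⁻¹ := by group
      rw [heq]
      exact mul_mem h1 (inv_mem h2)
    exact hgne i j hij (QuotientGroup.eq.2 h3)
  exact ⟨C', hC'compact, hreg, hconn, hfront, n, g, hcoverage, hdisj⟩
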